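/- Fix 0 < α < 1 and let M^+ = max_{x ∈ [L,U]} f(x) and M^− = min_{x ∈ [L,U]} f(x). Let Q ⊆ ℝ^η × ℝ × ℝ be the set of (x, y, z) with x ∈ [L, U], z ∈ [0, 1], satisfying: y ≥ f(x); y ≥ α f(x); y ≤ f(x) − (1 − α) M^− (1 − z); y ≤ α f(x) − (α − 1) M^+ z; and, for every subset I ⊆ {1,…,η}, y ≤ ( Σ_{i ∈ I} w_i (x_i − L̆_i (1 − z)) + ( b + Σ_{i ∉ I} w_i Ŭ_i ) z ) + α ( Σ_{i ∉ I} w_i (x_i − Ŭ_i z) + ( b + Σ_{i ∈ I} w_i L̆_i )(1 − z) ). Then Q together with z ∈ {0,1} is an ideal MIP formulation of gr(Leaky ∘ f; [L, U]): (i) the projection onto the (x, y)-coordinates of {(x,y,z) ∈ Q : z ∈ {0,1}} equals gr(Leaky ∘ f; [L, U]) = {(x, max{α f(x), f(x)}) : x ∈ [L, U]}; and (ii) every extreme point of Q satisfies z ∈ {0,1}. -/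

import Mathlib

noncomputable section

/-- Dot product on `Fin n → ℝ`. -/
def dotp {n : ℕ} (w x : Fin n → ℝ) : ℝ := ∑ i, w i * x i

/-- `L̆_i`: `L_i` if `w_i ≥ 0`, else `U_i`. -/
def breveL {n : ℕ} (w L U : Fin n → ℝ) (i : Fin n) : ℝ := if 0 ≤ w i then L i else U i

/-- `Ŭ_i`: `U_i` if `w_i ≥ 0`, else `L_i`. -/
def breveU {n : ℕ} (w L U : Fin n → ℝ) (i : Fin n) : ℝ := if 0 ≤ w i then U i else L i

set_option maxHeartbeats 1000000

lemma aux_sum_mul_sub {η : ℕ} (s : Finset (Fin η)) (g c x : Fin η → ℝ) (t : ℝ) :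
    ∑ i ∈ s, g i * (x i - c i * t) = ∑ i ∈ s, g i * x i - t * ∑ i ∈ s, g i * c i := by
  rw [Finset.mul_sum, ← Finset.sum_sub_distrib]
  exact Finset.sum_congr rfl fun i _ => by ring

lemma aux_breve_le {η : ℕ} (w L U : Fin η → ℝ) (hLU : ∀ i, L i ≤ U i) (x : Fin η → ℝ)
    (hx : ∀ i, L i ≤ x i ∧ x i ≤ U i) (i : Fin η) :
    w i * breveL w L U i ≤ w i * x i ∧ w i * x i ≤ w i * breveU w L U i := by
  unfold breveL breveU
  rcases le_or_gt 0 (w i) with h | h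
  · simp only [if_pos h]
    exact ⟨mul_le_mul_of_nonneg_left (hx i).1 h, mul_le_mul_of_nonneg_left (hx i).2 h⟩
  · simp only [if_neg (not_le.2 h)]
    exact ⟨mul_le_mul_of_nonpos_left (hx i).2 h.le, mul_le_mul_of_nonpos_left (hx i).1 h.le⟩

lemma aux_mul_min {c a b : ℝ} (hc : 0 ≤ c) : c * min a b = min (c*a) (c*b) := by
  rcases le_total a b with h|h
  · rw [min_eq_left h, min_eq_left (mul_le_mul_of_nonneg_left h hc)]
  · rw [min_eq_right h, min_eq_right (mul_le_mul_of_nonneg_left h hc)]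

lemma aux_mul_max {c a b : ℝ} (hc : 0 ≤ c) : c * max a b = max (c*a) (c*b) := by
  rcases le_total a b with h|h
  · rw [max_eq_right h, max_eq_right (mul_le_mul_of_nonneg_left h hc)]
  · rw [max_eq_left h, max_eq_left (mul_le_mul_of_nonneg_left h hc)]

lemma aux_mul_max_nonpos {c a b : ℝ} (hc : c ≤ 0) : c * max a b = min (c*a) (c*b) := by
  rcases le_total a b with h|h
  · rw [max_eq_right h, min_eq_right (mul_le_mul_of_nonpos_left h hc)]
  · rw [max_eq_left h, min_eq_left (mul_le_mul_of_nonpos_left h hc)]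

lemma aux_mul_min_nonpos {c a b : ℝ} (hc : c ≤ 0) : c * min a b = max (c*a) (c*b) := by
  rcases le_total a b with h|h
  · rw [min_eq_left h, max_eq_left (mul_le_mul_of_nonpos_left h hc)]
  · rw [min_eq_right h, max_eq_right (mul_le_mul_of_nonpos_left h hc)]

lemma aux_comb_mem {θ c d l u : ℝ} (hθ0 : 0 ≤ θ) (hθ1 : θ ≤ 1) (hc1 : l ≤ c) (hc2 : c ≤ u)
    (hd1 : l ≤ d) (hd2 : d ≤ u) : l ≤ (1-θ)*c + θ*d ∧ (1-θ)*c + θ*d ≤ u := by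
  constructor <;> nlinarith

def QS {η : ℕ} (w : Fin η → ℝ) (b α : ℝ) (L U : Fin η → ℝ) (Mm Mp : ℝ) :
    Set ((Fin η → ℝ) × ℝ × ℝ) :=
  {p | (∀ i, L i ≤ p.1 i ∧ p.1 i ≤ U i) ∧ 0 ≤ p.2.2 ∧ p.2.2 ≤ 1
      ∧ dotp w p.1 + b ≤ p.2.1
      ∧ α * (dotp w p.1 + b) ≤ p.2.1
      ∧ p.2.1 ≤ dotp w p.1 + b - (1 - α) * Mm * (1 - p.2.2)
      ∧ p.2.1 ≤ α * (dotp w p.1 + b) - (α - 1) * Mp * p.2.2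
      ∧ ∀ I : Finset (Fin η),
          p.2.1 ≤ (∑ i ∈ I, w i * (p.1 i - breveL w L U i * (1 - p.2.2))
              + (b + ∑ i ∈ Iᶜ, w i * breveU w L U i) * p.2.2)
            + α * (∑ i ∈ Iᶜ, w i * (p.1 i - breveU w L U i * p.2.2)
              + (b + ∑ i ∈ I, w i * breveL w L U i) * (1 - p.2.2))}

lemma memQ1 {η : ℕ} (w : Fin η → ℝ) (b α : ℝ) (hα : 0 < α ∧ α < 1) (L U : Fin η → ℝ)
    (hLU : ∀ i, L i ≤ U i) (Mm Mp : ℝ)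
    (hfMp : ∀ v : Fin η → ℝ, (∀ i, L i ≤ v i ∧ v i ≤ U i) → dotp w v + b ≤ Mp)
    (x : Fin η → ℝ) (hx : ∀ i, L i ≤ x i ∧ x i ≤ U i) (hfx : 0 ≤ dotp w x + b) :
    (x, dotp w x + b, (1:ℝ)) ∈ QS w b α L U Mm Mp := by
  dsimp only [QS, Set.mem_setOf_eq]
  refine ⟨hx, by norm_num, le_refl _, le_refl _, by nlinarith [hα.2], le_of_eq (by ring), ?_, ?_⟩
  · nlinarith [hfMp x hx, hα.2]
  · intro I
    have hsum : ∑ i ∈ Iᶜ, w i * x i ≤ ∑ i ∈ Iᶜ, w i * breveU w L U i :=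
      Finset.sum_le_sum fun i _ => (aux_breve_le w L U hLU x hx i).2
    have hsplit : ∑ i ∈ I, w i * x i + ∑ i ∈ Iᶜ, w i * x i = dotp w x :=
      Finset.sum_add_sum_compl I _
    have key : 0 ≤ (1 - α) * (∑ i ∈ Iᶜ, w i * breveU w L U i - ∑ i ∈ Iᶜ, w i * x i) :=
      mul_nonneg (by linarith [hα.2]) (by linarith)
    simp only [aux_sum_mul_sub]
    nlinarith [key]

lemma memQ0 {η : ℕ} (w : Fin η → ℝ) (b α : ℝ) (hα : 0 < α ∧ α < 1) (L U : Fin η → ℝ)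
    (hLU : ∀ i, L i ≤ U i) (Mm Mp : ℝ)
    (hfMm : ∀ v : Fin η → ℝ, (∀ i, L i ≤ v i ∧ v i ≤ U i) → Mm ≤ dotp w v + b)
    (x : Fin η → ℝ) (hx : ∀ i, L i ≤ x i ∧ x i ≤ U i) (hfx : dotp w x + b ≤ 0) :
    (x, α * (dotp w x + b), (0:ℝ)) ∈ QS w b α L U Mm Mp := by
  dsimp only [QS, Set.mem_setOf_eq]
  refine ⟨hx, le_refl _, by norm_num, by nlinarith [hα.2], le_refl _, ?_, le_of_eq (by ring), ?_⟩
  · nlinarith [hfMm x hx, hα.2]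
  · intro I
    have hsum : ∑ i ∈ I, w i * breveL w L U i ≤ ∑ i ∈ I, w i * x i :=
      Finset.sum_le_sum fun i _ => (aux_breve_le w L U hLU x hx i).1
    have hsplit : ∑ i ∈ I, w i * x i + ∑ i ∈ Iᶜ, w i * x i = dotp w x :=
      Finset.sum_add_sum_compl I _
    have key : 0 ≤ (1 - α) * (∑ i ∈ I, w i * x i - ∑ i ∈ I, w i * breveL w L U i) :=
      mul_nonneg (by linarith [hα.2]) (by linarith)
    simp only [aux_sum_mul_sub]
    nlinarith [key]

lemma decompose {η : ℕ} (w : Fin η → ℝ) (b α : ℝ) (hα : 0 < α ∧ α < 1) (L U : Fin η → ℝ)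
    (hLU : ∀ i, L i ≤ U i) (Mm Mp : ℝ)
    (x : Fin η → ℝ) (y z : ℝ)
    (hmem : (x, y, z) ∈ QS w b α L U Mm Mp) (hz0 : 0 < z) (hz1 : z < 1) :
    ∃ x0 x1 : Fin η → ℝ,
      (∀ i, L i ≤ x0 i ∧ x0 i ≤ U i) ∧ (∀ i, L i ≤ x1 i ∧ x1 i ≤ U i) ∧
      dotp w x0 + b ≤ 0 ∧ 0 ≤ dotp w x1 + b ∧
      (∀ i, x i = (1 - z) * x0 i + z * x1 i) ∧
      y = (1 - z) * (α * (dotp w x0 + b)) + z * (dotp w x1 + b) := by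
  classical
  obtain ⟨hx, h0z, hz1', hyf, hyaf, h4, h5, hIall⟩ := hmem
  dsimp only at hx hyf hyaf hIall
  have h1α : (0:ℝ) < 1 - α := by linarith [hα.2]
  have h1z : (0:ℝ) < 1 - z := by linarith
  -- restricted box
  set u : Fin η → ℝ := fun i => min (U i) ((x i - (1-z)*L i)/z) with hu
  set l : Fin η → ℝ := fun i => max (L i) ((x i - (1-z)*U i)/z) with hl
  have hlx : ∀ i, l i ≤ x i := fun i =>
    max_le (hx i).1 (by rw [div_le_iff₀ hz0]; nlinarith [(hx i).2])
  have hxu : ∀ i, x i ≤ u i := fun i =>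
    le_min (hx i).2 (by rw [le_div_iff₀ hz0]; nlinarith [(hx i).1])
  have hlu : ∀ i, l i ≤ u i := fun i => (hlx i).trans (hxu i)
  have hLl : ∀ i, L i ≤ l i := fun i => le_max_left _ _
  have huU : ∀ i, u i ≤ U i := fun i => min_le_left _ _
  have hzu : ∀ i, z * u i ≤ x i - (1-z) * L i := fun i => by
    have h := (le_div_iff₀ hz0).1 (min_le_right (U i) ((x i - (1-z)*L i)/z))
    linarith
  have hzl : ∀ i, x i - (1-z) * U i ≤ z * l i := fun i => by
    have h := (div_le_iff₀ hz0).1 (le_max_right (L i) ((x i - (1-z)*U i)/z))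
    linarith
  set vmax : Fin η → ℝ := fun i => if 0 ≤ w i then u i else l i with hvmaxdef
  set vmin : Fin η → ℝ := fun i => if 0 ≤ w i then l i else u i with hvmindef
  have hvmaxr : ∀ i, l i ≤ vmax i ∧ vmax i ≤ u i := fun i => by
    simp only [hvmaxdef]; split <;> exact ⟨by first | exact le_refl _ | exact hlu i,
      by first | exact le_refl _ | exact hlu i⟩
  have hvminr : ∀ i, l i ≤ vmin i ∧ vmin i ≤ u i := fun i => by
    simp only [hvmindef]; split <;> exact ⟨by first | exact le_refl _ | exact hlu i,
      by first | exact le_refl _ | exact hlu i⟩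
  -- per-coordinate identities
  have hvmax : ∀ i, z * (w i * vmax i)
      = min (w i * x i - (1-z)*(w i * breveL w L U i)) (z * (w i * breveU w L U i)) := by
    intro i
    simp only [hvmaxdef]
    unfold breveL breveU
    rcases le_or_gt 0 (w i) with h | h
    · rw [if_pos h, if_pos h, if_pos h, show z * (w i * (u i)) = (z * w i) * u i from by ring,
        hu, aux_mul_min (mul_nonneg hz0.le h), min_comm]
      congr 1
      · field_simp
      · ring
    · rw [if_neg (not_le.2 h), if_neg (not_le.2 h), if_neg (not_le.2 h),
        show z * (w i * (l i)) = (z * w i) * l i from by ring,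
        hl, aux_mul_max_nonpos (mul_nonpos_of_nonneg_of_nonpos hz0.le h.le), min_comm]
      congr 1
      · field_simp
      · ring
  have hvmin : ∀ i, z * (w i * vmin i)
      = max (w i * x i - (1-z)*(w i * breveU w L U i)) (z * (w i * breveL w L U i)) := by
    intro i
    simp only [hvmindef]
    unfold breveL breveU
    rcases le_or_gt 0 (w i) with h | h
    · rw [if_pos h, if_pos h, if_pos h, show z * (w i * (l i)) = (z * w i) * l i from by ring,
        hl, aux_mul_max (mul_nonneg hz0.le h), max_comm]
      congr 1
      · field_simp
      · ring
    · rw [if_neg (not_le.2 h), if_neg (not_le.2 h), if_neg (not_le.2 h),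
        show z * (w i * (u i)) = (z * w i) * u i from by ring,
        hu, aux_mul_min_nonpos (mul_nonpos_of_nonneg_of_nonpos hz0.le h.le), max_comm]
      congr 1
      · field_simp
      · ring
  have hzfmax : z * (dotp w vmax + b) = z*b + ∑ i, min ((w i * x i - (1-z)*(w i * breveL w L U i))) ((z * (w i * breveU w L U i))) := by
    rw [dotp, mul_add, Finset.mul_sum, Finset.sum_congr rfl (fun i _ => hvmax i)]
    ring
  have hzfmin : z * (dotp w vmin + b) = z*b + ∑ i, max ((w i * x i - (1-z)*(w i * breveU w L U i))) ((z * (w i * breveL w L U i))) := by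
    rw [dotp, mul_add, Finset.mul_sum, Finset.sum_congr rfl (fun i _ => hvmin i)]
    ring
  -- upper bound : y - α f ≤ (1-α) z (f vmax)
  set I₁ := Finset.univ.filter (fun i => (w i * x i - (1-z)*(w i * breveL w L U i)) ≤ (z * (w i * breveU w L U i))) with hI₁
  have hsplitmin : ∑ i ∈ I₁, (w i * x i - (1-z)*(w i * breveL w L U i)) + ∑ i ∈ I₁ᶜ, (z * (w i * breveU w L U i)) = ∑ i, min ((w i * x i - (1-z)*(w i * breveL w L U i))) ((z * (w i * breveU w L U i))) := by
    rw [← Finset.sum_add_sum_compl I₁ (fun i => min ((w i * x i - (1-z)*(w i * breveL w L U i))) ((z * (w i * breveU w L U i))))]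
    congr 1
    · exact Finset.sum_congr rfl fun i hi => (min_eq_left (Finset.mem_filter.1 hi).2).symm
    · refine Finset.sum_congr rfl fun i hi => ?_
      simp only [hI₁, Finset.mem_compl, Finset.mem_filter, Finset.mem_univ, true_and,
        not_le] at hi
      exact (min_eq_right hi.le).symm
  have hup : y - α * (dotp w x + b) ≤ (1 - α) * (z * (dotp w vmax + b)) := by
    have hI := hIall I₁
    rw [aux_sum_mul_sub, aux_sum_mul_sub] at hI
    have e3 : ∑ i ∈ I₁, (w i * x i - (1-z)*(w i * breveL w L U i))
        = ∑ i ∈ I₁, w i * x i - (1-z) * ∑ i ∈ I₁, w i * breveL w L U i := by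
      rw [Finset.sum_sub_distrib, ← Finset.mul_sum]
    have e4 : ∑ i ∈ I₁ᶜ, (z * (w i * breveU w L U i)) = z * ∑ i ∈ I₁ᶜ, w i * breveU w L U i := by
      rw [← Finset.mul_sum]
    have e5 : dotp w x = ∑ i ∈ I₁, w i * x i + ∑ i ∈ I₁ᶜ, w i * x i :=
      (Finset.sum_add_sum_compl I₁ _).symm
    rw [hzfmax, ← hsplitmin, e3, e4, e5]
    ring_nf at hI ⊢
    linarith [hI]
  -- lower bound : (1-α) z (f vmin) ≤ y - α f
  set J := Finset.univ.filter (fun i => (w i * x i - (1-z)*(w i * breveU w L U i)) ≤ (z * (w i * breveL w L U i))) with hJ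
  have hsplitmax : ∑ i ∈ J, (z * (w i * breveL w L U i)) + ∑ i ∈ Jᶜ, (w i * x i - (1-z)*(w i * breveU w L U i)) = ∑ i, max ((w i * x i - (1-z)*(w i * breveU w L U i))) ((z * (w i * breveL w L U i))) := by
    rw [← Finset.sum_add_sum_compl J (fun i => max ((w i * x i - (1-z)*(w i * breveU w L U i))) ((z * (w i * breveL w L U i))))]
    congr 1
    · exact Finset.sum_congr rfl fun i hi => (max_eq_right (Finset.mem_filter.1 hi).2).symm
    · refine Finset.sum_congr rfl fun i hi => ?_
      simp only [hJ, Finset.mem_compl, Finset.mem_filter, Finset.mem_univ, true_and,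
        not_le] at hi
      exact (max_eq_left hi.le).symm
  have hc1 : z * (dotp w vmin + b)
      ≤ z * (b + ∑ i ∈ J, w i * breveL w L U i + ∑ i ∈ Jᶜ, w i * breveU w L U i) := by
    have hs1 : ∑ i ∈ J, (z * (w i * breveL w L U i)) = z * ∑ i ∈ J, w i * breveL w L U i := by
      rw [← Finset.mul_sum]
    have hs2' : ∑ i ∈ Jᶜ, (w i * x i - (1-z)*(w i * breveU w L U i))
        = ∑ i ∈ Jᶜ, w i * x i - (1-z) * ∑ i ∈ Jᶜ, w i * breveU w L U i := by
      rw [Finset.sum_sub_distrib, ← Finset.mul_sum]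
    have hBQ : ∑ i ∈ Jᶜ, w i * x i ≤ ∑ i ∈ Jᶜ, w i * breveU w L U i :=
      Finset.sum_le_sum fun i _ => (aux_breve_le w L U hLU x hx i).2
    rw [hzfmin, ← hsplitmax, hs1, hs2']
    nlinarith [hBQ]
  have hc2 : z * (dotp w vmin + b) - (dotp w x + b)
      ≤ -(1-z) * (b + ∑ i ∈ J, w i * breveL w L U i + ∑ i ∈ Jᶜ, w i * breveU w L U i) := by
    have hs1 : ∑ i ∈ J, (z * (w i * breveL w L U i)) = z * ∑ i ∈ J, w i * breveL w L U i := by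
      rw [← Finset.mul_sum]
    have hs2' : ∑ i ∈ Jᶜ, (w i * x i - (1-z)*(w i * breveU w L U i))
        = ∑ i ∈ Jᶜ, w i * x i - (1-z) * ∑ i ∈ Jᶜ, w i * breveU w L U i := by
      rw [Finset.sum_sub_distrib, ← Finset.mul_sum]
    have hPA : ∑ i ∈ J, w i * breveL w L U i ≤ ∑ i ∈ J, w i * x i :=
      Finset.sum_le_sum fun i _ => (aux_breve_le w L U hLU x hx i).1
    have e5' : dotp w x = ∑ i ∈ J, w i * x i + ∑ i ∈ Jᶜ, w i * x i :=
      (Finset.sum_add_sum_compl J _).symm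
    rw [hzfmin, ← hsplitmax, hs1, hs2', e5']
    nlinarith [hPA]
  have hlow : (1-α) * (z * (dotp w vmin + b)) ≤ y - α * (dotp w x + b) := by
    rcases le_or_gt 0 (b + ∑ i ∈ J, w i * breveL w L U i + ∑ i ∈ Jᶜ, w i * breveU w L U i)
      with hK | hK
    · have hcf : z * (dotp w vmin + b) ≤ dotp w x + b := by nlinarith [hc2, hK]
      nlinarith [hyf, mul_le_mul_of_nonneg_left hcf h1α.le]
    · have hc0 : z * (dotp w vmin + b) ≤ 0 := by nlinarith [hc1, hK]
      nlinarith [hyaf, mul_nonpos_of_nonneg_of_nonpos h1α.le hc0]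
  -- the interpolation
  set F1 := dotp w vmax + b with hF1
  set F0 := dotp w vmin + b with hF0
  have hne1α : (1 - α) ≠ 0 := h1α.ne'
  have hne1z : (1 - z) ≠ 0 := h1z.ne'
  set S := (y - α * (dotp w x + b)) / (1 - α) with hS
  have hSmul : (1 - α) * S = y - α * (dotp w x + b) := by
    rw [hS]; field_simp
  have hS1 : S ≤ z * F1 := by
    rw [hS, div_le_iff₀ h1α]; nlinarith [hup]
  have hS0 : z * F0 ≤ S := by
    rw [hS, le_div_iff₀ h1α]; nlinarith [hlow]
  have hSnn : 0 ≤ S := by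
    rw [hS]; exact div_nonneg (by linarith) h1α.le
  have hSf : dotp w x + b ≤ S := by
    rw [hS, le_div_iff₀ h1α]; nlinarith [hyf]
  set θ := if z * F1 - z * F0 = 0 then (0:ℝ) else (S - z * F0) / (z * F1 - z * F0) with hθdef
  have hden : 0 ≤ z * F1 - z * F0 := by linarith
  have hθ0 : 0 ≤ θ := by
    rw [hθdef]
    by_cases hd : z * F1 - z * F0 = 0
    · rw [if_pos hd]
    · rw [if_neg hd]; exact div_nonneg (by linarith) hden
  have hθ1 : θ ≤ 1 := by
    rw [hθdef]
    by_cases hd : z * F1 - z * F0 = 0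
    · rw [if_pos hd]; norm_num
    · rw [if_neg hd, div_le_one (lt_of_le_of_ne hden (Ne.symm hd))]; linarith
  have hθmul : θ * (z * F1 - z * F0) = S - z * F0 := by
    rw [hθdef]
    by_cases hd : z * F1 - z * F0 = 0
    · rw [if_pos hd]
      have : S = z * F0 := le_antisymm (by linarith) hS0
      rw [this]; ring
    · rw [if_neg hd]; exact div_mul_cancel₀ _ hd
  set x1 : Fin η → ℝ := fun i => (1-θ) * vmin i + θ * vmax i with hx1def
  have hx1r : ∀ i, l i ≤ x1 i ∧ x1 i ≤ u i := fun i =>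
    aux_comb_mem hθ0 hθ1 (hvminr i).1 (hvminr i).2 (hvmaxr i).1 (hvmaxr i).2
  have hx1box : ∀ i, L i ≤ x1 i ∧ x1 i ≤ U i := fun i =>
    ⟨(hLl i).trans (hx1r i).1, (hx1r i).2.trans (huU i)⟩
  have hdot1 : dotp w x1 = (1-θ) * dotp w vmin + θ * dotp w vmax := by
    simp only [hx1def, dotp]
    rw [Finset.mul_sum, Finset.mul_sum, ← Finset.sum_add_distrib]
    exact Finset.sum_congr rfl fun i _ => by ring
  have hzfx1 : z * (dotp w x1 + b) = S := by
    have he : z * (dotp w x1 + b) = z * F0 + θ * (z * F1 - z * F0) := by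
      rw [hdot1, hF1, hF0]; ring
    rw [he, hθmul]; ring
  set x0 : Fin η → ℝ := fun i => (x i - z * x1 i) / (1 - z) with hx0def
  have hx0box : ∀ i, L i ≤ x0 i ∧ x0 i ≤ U i := fun i => by
    constructor
    · simp only [hx0def]
      rw [le_div_iff₀ h1z]
      have h2 : z * x1 i ≤ z * u i := mul_le_mul_of_nonneg_left (hx1r i).2 hz0.le
      have h1 := hzu i
      linarith
    · simp only [hx0def]
      rw [div_le_iff₀ h1z]
      have h2 : z * l i ≤ z * x1 i := mul_le_mul_of_nonneg_left (hx1r i).1 hz0.le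
      have h1 := hzl i
      linarith
  have hdot0 : (1 - z) * dotp w x0 = dotp w x - z * dotp w x1 := by
    simp only [hx0def, dotp]
    rw [Finset.mul_sum, Finset.mul_sum, ← Finset.sum_sub_distrib]
    refine Finset.sum_congr rfl fun i _ => ?_
    field_simp
  have hfx0eq : (1 - z) * (dotp w x0 + b) = dotp w x + b - S := by
    linear_combination hdot0 - hzfx1
  have hfx0 : dotp w x0 + b ≤ 0 := by nlinarith [hfx0eq, hSf, h1z]
  have hfx1 : 0 ≤ dotp w x1 + b := by nlinarith [hzfx1, hSnn, hz0]
  refine ⟨x0, x1, hx0box, hx1box, hfx0, hfx1, ?_, ?_⟩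
  · intro i
    simp only [hx0def]
    field_simp
    ring
  · linear_combination (-α) * hfx0eq + (-1 : ℝ) * hzfx1 + (-1 : ℝ) * hSmul

theorem stmt19 {η : ℕ} (hη : 1 ≤ η)
    (w : Fin η → ℝ) (b : ℝ) (α : ℝ) (hα : 0 < α ∧ α < 1)
    (L U : Fin η → ℝ) (hLU : ∀ i, L i ≤ U i)
    (hirrpos : ∃ x : Fin η → ℝ, (∀ i, L i ≤ x i ∧ x i ≤ U i) ∧ 0 < dotp w x + b)
    (hirrneg : ∃ x : Fin η → ℝ, (∀ i, L i ≤ x i ∧ x i ≤ U i) ∧ dotp w x + b < 0)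
    -- M⁺ = max of f over the box, M⁻ = min of f over the box (both attained, the box
    -- being compact, so they coincide with sSup/sInf of the image of f)
    (Mp Mm : ℝ)
    (hMp : Mp = sSup ((fun x => dotp w x + b) '' {x | ∀ i, L i ≤ x i ∧ x i ≤ U i}))
    (hMm : Mm = sInf ((fun x => dotp w x + b) '' {x | ∀ i, L i ≤ x i ∧ x i ≤ U i}))
    (Q : Set ((Fin η → ℝ) × ℝ × ℝ))
    (hQ : Q = {p | (∀ i, L i ≤ p.1 i ∧ p.1 i ≤ U i) ∧ 0 ≤ p.2.2 ∧ p.2.2 ≤ 1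
      ∧ dotp w p.1 + b ≤ p.2.1
      ∧ α * (dotp w p.1 + b) ≤ p.2.1
      ∧ p.2.1 ≤ dotp w p.1 + b - (1 - α) * Mm * (1 - p.2.2)
      ∧ p.2.1 ≤ α * (dotp w p.1 + b) - (α - 1) * Mp * p.2.2
      ∧ ∀ I : Finset (Fin η),
          p.2.1 ≤ (∑ i ∈ I, w i * (p.1 i - breveL w L U i * (1 - p.2.2))
              + (b + ∑ i ∈ Iᶜ, w i * breveU w L U i) * p.2.2)
            + α * (∑ i ∈ Iᶜ, w i * (p.1 i - breveU w L U i * p.2.2)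
              + (b + ∑ i ∈ I, w i * breveL w L U i) * (1 - p.2.2))}) :
    -- (i) validity
    ((fun p : (Fin η → ℝ) × ℝ × ℝ => (p.1, p.2.1)) ''
        {p ∈ Q | p.2.2 = 0 ∨ p.2.2 = 1}
      = {q : (Fin η → ℝ) × ℝ | (∀ i, L i ≤ q.1 i ∧ q.1 i ≤ U i)
          ∧ q.2 = max (α * (dotp w q.1 + b)) (dotp w q.1 + b)})
    -- (ii) every extreme point of Q has binary z
    ∧ (∀ p ∈ Set.extremePoints ℝ Q, p.2.2 = 0 ∨ p.2.2 = 1) := by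

  have hQQS : Q = QS w b α L U Mm Mp := hQ
  clear hQ
  subst hQQS
  -- bounds on Mp, Mm
  have hfMp : ∀ v : Fin η → ℝ, (∀ i, L i ≤ v i ∧ v i ≤ U i) → dotp w v + b ≤ Mp := by
    intro v hv
    rw [hMp]
    refine le_csSup ⟨dotp w (breveU w L U) + b, ?_⟩ ⟨v, hv, rfl⟩
    rintro r ⟨x, hx, rfl⟩
    have : dotp w x ≤ dotp w (breveU w L U) :=
      Finset.sum_le_sum fun i _ => (aux_breve_le w L U hLU x hx i).2
    simpa using this
  have hfMm : ∀ v : Fin η → ℝ, (∀ i, L i ≤ v i ∧ v i ≤ U i) → Mm ≤ dotp w v + b := by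
    intro v hv
    rw [hMm]
    refine csInf_le ⟨dotp w (breveL w L U) + b, ?_⟩ ⟨v, hv, rfl⟩
    rintro r ⟨x, hx, rfl⟩
    have : dotp w (breveL w L U) ≤ dotp w x :=
      Finset.sum_le_sum fun i _ => (aux_breve_le w L U hLU x hx i).1
    simpa using this
  constructor
  · -- part (i)
    ext q
    constructor
    · rintro ⟨p, ⟨hpQ, hz⟩, rfl⟩
      obtain ⟨hx, h0z, hz1, hyf, hyaf, h4, h5, hI⟩ := hpQ
      simp only [Set.mem_setOf_eq]
      refine ⟨hx, ?_⟩
      rcases hz with hz | hz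
      · -- z = 0 : y = α f, f ≤ 0
        rw [hz] at h5
        have hy : p.2.1 = α * (dotp w p.1 + b) := le_antisymm (by linarith) hyaf
        rw [hy, max_eq_left]
        nlinarith [hyf, hy, hα.2]
      · -- z = 1 : y = f
        rw [hz] at h4
        have hy : p.2.1 = dotp w p.1 + b := le_antisymm (by linarith) hyf
        rw [hy, max_eq_right]
        linarith [hyaf, hy]
    · rintro ⟨hx, hy⟩
      rcases le_or_gt 0 (dotp w q.1 + b) with hf | hf
      · refine ⟨(q.1, dotp w q.1 + b, 1), ⟨memQ1 w b α hα L U hLU Mm Mp hfMp q.1 hx hf,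
          Or.inr rfl⟩, ?_⟩
        have h2 : q.2 = dotp w q.1 + b := by
          rw [hy]; exact max_eq_right (by nlinarith [hα.1, hα.2])
        show (q.1, dotp w q.1 + b) = q
        exact Prod.ext rfl h2.symm
      · refine ⟨(q.1, α * (dotp w q.1 + b), 0), ⟨memQ0 w b α hα L U hLU Mm Mp hfMm q.1 hx hf.le,
          Or.inl rfl⟩, ?_⟩
        have h2 : q.2 = α * (dotp w q.1 + b) := by
          rw [hy]; exact max_eq_left (by nlinarith [hα.2])
        show (q.1, α * (dotp w q.1 + b)) = q
        exact Prod.ext rfl h2.symm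
  · -- part (ii)
    rintro ⟨x, y, z⟩ hp
    rw [mem_extremePoints] at hp
    by_contra hcon
    push_neg at hcon
    obtain ⟨hz0', hz1'⟩ := hcon
    obtain ⟨hmem, hext⟩ := hp
    have h0z : (0:ℝ) ≤ z := hmem.2.1
    have hz1'' : z ≤ 1 := hmem.2.2.1
    have hz0 : 0 < z := lt_of_le_of_ne h0z (Ne.symm hz0')
    have hz1 : z < 1 := lt_of_le_of_ne hz1'' hz1'
    obtain ⟨x0, x1, hx0box, hx1box, hfx0, hfx1, hxcomb, hycomb⟩ :=
      decompose w b α hα L U hLU Mm Mp x y z hmem hz0 hz1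
    have hq0 : ((x0, α * (dotp w x0 + b), (0:ℝ)) : (Fin η → ℝ) × ℝ × ℝ)
        ∈ QS w b α L U Mm Mp := memQ0 w b α hα L U hLU Mm Mp hfMm x0 hx0box hfx0
    have hq1 : ((x1, dotp w x1 + b, (1:ℝ)) : (Fin η → ℝ) × ℝ × ℝ)
        ∈ QS w b α L U Mm Mp := memQ1 w b α hα L U hLU Mm Mp hfMp x1 hx1box hfx1
    have hseg : ((x, y, z) : (Fin η → ℝ) × ℝ × ℝ)
        ∈ openSegment ℝ (x0, α * (dotp w x0 + b), (0:ℝ)) (x1, dotp w x1 + b, (1:ℝ)) := by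
      refine ⟨1 - z, z, by linarith, hz0, by ring, ?_⟩
      refine Prod.ext ?_ (Prod.ext ?_ ?_)
      · funext i
        simp only [Prod.smul_mk, Prod.mk_add_mk, Pi.add_apply, Pi.smul_apply, smul_eq_mul]
        exact (hxcomb i).symm
      · simp only [Prod.smul_mk, Prod.mk_add_mk, smul_eq_mul]
        exact hycomb.symm
      · simp only [Prod.smul_mk, Prod.mk_add_mk, smul_eq_mul]
        ring
    have := (hext _ hq0 _ hq1 hseg).1
    have hzz : (0:ℝ) = z := congrArg (fun p => p.2.2) this
    exact hz0' hzz.symm
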